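/- Let X be a finite metric space with |X| = 3 and points x_1, x_2, x_3 with pairwise distances d'_{12} ≤ d'_{13} ≤ d'_{23}. If the blowup-polynomial p_X(n_1,n_2,n_3) is symmetric in n_1, n_2, n_3, then d'_{12} = d'_{13} = d'_{23}, i.e., the metric is a rescaled discrete metric. -/

import Mathlib

open Matrix MvPolynomial BigOperators

/-- for a three-point metric space with pairwise distances
`d12 ≤ d13 ≤ d23`, if the blowup-polynomial `p_X = det N` is symmetric in
`n_1, n_2, n_3`, then all three distances are equal (the metric is a rescaled
discrete metric). -/
theorem blowup_poly_symmetric_three_points (d12 d13 d23 : ℝ)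
    (h1 : 0 < d12) (h2 : d12 ≤ d13) (h3 : d13 ≤ d23)
    (t1 : d23 ≤ d12 + d13) (t2 : d13 ≤ d12 + d23) (t3 : d12 ≤ d13 + d23)
    (hsym : MvPolynomial.IsSymmetric
      ((Matrix.of
        ![![(MvPolynomial.X 0 - 1) * MvPolynomial.C (2 * d12),
            MvPolynomial.X 0 * MvPolynomial.C d12,
            MvPolynomial.X 0 * MvPolynomial.C d13],
          ![MvPolynomial.X 1 * MvPolynomial.C d12,
            (MvPolynomial.X 1 - 1) * MvPolynomial.C (2 * d12),
            MvPolynomial.X 1 * MvPolynomial.C d23],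
          ![MvPolynomial.X 2 * MvPolynomial.C d13,
            MvPolynomial.X 2 * MvPolynomial.C d23,
            (MvPolynomial.X 2 - 1) * MvPolynomial.C (2 * d13)]] :
        Matrix (Fin 3) (Fin 3) (MvPolynomial (Fin 3) ℝ)).det)) :
    d12 = d13 ∧ d13 = d23 := by
  set P := ((Matrix.of
        ![![(MvPolynomial.X 0 - 1) * MvPolynomial.C (2 * d12),
            MvPolynomial.X 0 * MvPolynomial.C d12,
            MvPolynomial.X 0 * MvPolynomial.C d13],
          ![MvPolynomial.X 1 * MvPolynomial.C d12,
            (MvPolynomial.X 1 - 1) * MvPolynomial.C (2 * d12),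
            MvPolynomial.X 1 * MvPolynomial.C d23],
          ![MvPolynomial.X 2 * MvPolynomial.C d13,
            MvPolynomial.X 2 * MvPolynomial.C d23,
            (MvPolynomial.X 2 - 1) * MvPolynomial.C (2 * d13)]] :
        Matrix (Fin 3) (Fin 3) (MvPolynomial (Fin 3) ℝ)).det) with hP
  have key : ∀ (σ : Equiv.Perm (Fin 3)) (x : Fin 3 → ℝ),
      MvPolynomial.eval (x ∘ σ) P = MvPolynomial.eval x P := by
    intro σ x
    conv_rhs => rw [← hsym σ]
    rw [MvPolynomial.eval_rename]
  have hev : ∀ x : Fin 3 → ℝ, MvPolynomial.eval x P =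
      ((x 0 - 1) * (2 * d12) * (((x 1 - 1) * (2 * d12)) * ((x 2 - 1) * (2 * d13))
        - (x 1 * d23) * (x 2 * d23))
      - (x 0 * d12) * ((x 1 * d12) * ((x 2 - 1) * (2 * d13)) - (x 1 * d23) * (x 2 * d13))
      + (x 0 * d13) * ((x 1 * d12) * (x 2 * d23) - ((x 1 - 1) * (2 * d12)) * (x 2 * d13))) := by
    intro x
    rw [hP, RingHom.map_det, Matrix.det_fin_three]
    simp [Matrix.map_apply]
    ring
  -- swap 1 and 2 applied to (1,1,0) gives (1,0,1)
  have e1 := key (Equiv.swap 1 2) ![1,1,0]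
  have e2 := key (Equiv.swap 0 2) ![1,1,0]
  rw [hev, hev] at e1 e2
  have hc1 : (![1,1,0] ∘ (Equiv.swap (1:Fin 3) 2) : Fin 3 → ℝ) = ![1,0,1] := by
    ext i; fin_cases i <;> simp [Equiv.swap_apply_def]
  have hc2 : (![1,1,0] ∘ (Equiv.swap (0:Fin 3) 2) : Fin 3 → ℝ) = ![0,1,1] := by
    ext i; fin_cases i <;> simp [Equiv.swap_apply_def]
  rw [hc1] at e1
  rw [hc2] at e2
  simp only [Matrix.cons_val_two, Matrix.tail_cons, Matrix.head_cons] at e1 e2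
  norm_num at e1 e2
  -- e1 : value at (1,0,1) = value at (1,1,0), e2 : value at (0,1,1) = value at (1,1,0)
  have h0 : 0 < d13 := lt_of_lt_of_le h1 h2
  have h0' : 0 < d23 := lt_of_lt_of_le h0 h3
  have hab : d12 = d13 := by nlinarith [e1, mul_pos h1 h0, sq_nonneg (d12 - d13)]
  subst hab
  have hc : d23 * d23 = d12 * d12 := by nlinarith [e2]
  exact ⟨rfl, by nlinarith [hc]⟩
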